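/- Let E ⊆ ℝ be measurable and 0 < λ < α < 1. Define the iterated halos H⁺_α^{(0)}(E) = E and H⁺_α^{(k)}(E) = {x : M⁺1_{H⁺_α^{(k-1)}(E)}(x) > α}. Then H⁺_λ(E) ⊆ H⁺_α^{(N)}(E) where N = ⌈log(1/λ)/log(1/α)⌉. -/

import Mathlib

open MeasureTheory Set

noncomputable def Mplus (f : ℝ → ℝ) (x : ℝ) : ℝ :=
  ⨆ h : {h : ℝ // 0 < h}, (h.1)⁻¹ * ∫ t in x..(x + h.1), |f t|

noncomputable def Mminus (f : ℝ → ℝ) (x : ℝ) : ℝ :=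
  ⨆ h : {h : ℝ // 0 < h}, (h.1)⁻¹ * ∫ t in (x - h.1)..x, |f t|

noncomputable def halo (γ : ℝ) (E : Set ℝ) : Set ℝ :=
  {x | γ < Mplus (E.indicator fun _ => (1:ℝ)) x}

noncomputable def wsize (w : ℝ → ℝ) (E : Set ℝ) : ENNReal :=
  ∫⁻ x in E, ENNReal.ofReal (w x)

noncomputable def tauber (w : ℝ → ℝ) (α : ℝ) : ENNReal :=
  ⨆ E : {E : Set ℝ // MeasurableSet E ∧ 0 < wsize w E ∧ wsize w E < ⊤},
    wsize w (halo α E.1) / wsize w E.1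


lemma integral_indicator_abs (E : Set ℝ) (hE : MeasurableSet E) (x h : ℝ) (hh : 0 < h) :
    ∫ t in x..(x + h), |E.indicator (fun _ => (1:ℝ)) t|
      = (volume (E ∩ Ioc x (x + h))).toReal := by
  have habs : ∀ t, |E.indicator (fun _ => (1:ℝ)) t| = E.indicator (fun _ => (1:ℝ)) t := by
    intro t
    exact abs_of_nonneg (Set.indicator_nonneg (by intro _ _; norm_num) t)
  simp_rw [habs]
  rw [intervalIntegral.integral_of_le (by linarith)]
  rw [MeasureTheory.setIntegral_indicator hE]
  simp [Measure.restrict_apply, inter_comm]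
  rfl

lemma vol_inter_Ioc_le (E : Set ℝ) (x h : ℝ) :
    volume (E ∩ Ioc x (x + h)) ≤ ENNReal.ofReal h := by
  calc volume (E ∩ Ioc x (x + h)) ≤ volume (Ioc x (x + h)) :=
        measure_mono inter_subset_right
    _ = ENNReal.ofReal h := by rw [Real.volume_Ioc]; ring_nf

lemma vol_inter_Ioc_ne_top (E : Set ℝ) (x h : ℝ) :
    volume (E ∩ Ioc x (x + h)) ≠ ⊤ :=
  ne_top_of_le_ne_top ENNReal.ofReal_ne_top (vol_inter_Ioc_le E x h)

lemma vol_toReal_le (E : Set ℝ) (x h : ℝ) (hh : 0 ≤ h) :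
    (volume (E ∩ Ioc x (x + h))).toReal ≤ h := by
  have := ENNReal.toReal_mono ENNReal.ofReal_ne_top (vol_inter_Ioc_le E x h)
  rwa [ENNReal.toReal_ofReal hh] at this

lemma bddAbove_avg (E : Set ℝ) (hE : MeasurableSet E) (x : ℝ) :
    BddAbove (Set.range fun h : {h : ℝ // 0 < h} =>
      (h.1)⁻¹ * ∫ t in x..(x + h.1), |E.indicator (fun _ => (1:ℝ)) t|) := by
  refine ⟨1, ?_⟩
  rintro y ⟨⟨h, hh⟩, rfl⟩
  simp only
  rw [integral_indicator_abs E hE x h hh]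
  have h1 : (volume (E ∩ Ioc x (x + h))).toReal ≤ h := vol_toReal_le E x h hh.le
  have h2 : (0:ℝ) < h⁻¹ := inv_pos.2 hh
  calc h⁻¹ * (volume (E ∩ Ioc x (x + h))).toReal ≤ h⁻¹ * h := by
        exact mul_le_mul_of_nonneg_left h1 h2.le
    _ = 1 := inv_mul_cancel₀ hh.ne'

lemma mem_halo_iff {E : Set ℝ} (hE : MeasurableSet E) {γ x : ℝ} :
    x ∈ halo γ E ↔ ∃ h : ℝ, 0 < h ∧ γ * h < (volume (E ∩ Ioc x (x + h))).toReal := by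
  rw [halo, mem_setOf_eq, Mplus, lt_ciSup_iff (bddAbove_avg E hE x)]
  constructor
  · rintro ⟨⟨h, hh⟩, hlt⟩
    rw [integral_indicator_abs E hE x h hh] at hlt
    refine ⟨h, hh, ?_⟩
    have := mul_lt_mul_of_pos_left hlt hh
    simp only at this
    rw [← mul_assoc, mul_inv_cancel₀ hh.ne', one_mul, mul_comm h γ] at this
    exact this
  · rintro ⟨h, hh, hlt⟩
    refine ⟨⟨h, hh⟩, ?_⟩
    rw [integral_indicator_abs E hE x h hh]
    have := mul_lt_mul_of_pos_left hlt (inv_pos.2 hh)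
    simp only
    rw [← mul_assoc, mul_comm h⁻¹ γ, mul_assoc, inv_mul_cancel₀ hh.ne', mul_one] at this
    exact this

lemma not_mem_halo {E : Set ℝ} (hE : MeasurableSet E) {γ x : ℝ} (hx : x ∉ halo γ E)
    {h : ℝ} (hh : 0 < h) : (volume (E ∩ Ioc x (x + h))).toReal ≤ γ * h := by
  by_contra hc
  exact hx ((mem_halo_iff hE).2 ⟨h, hh, not_le.1 hc⟩)

lemma vol_inter_Ioc_ne_top_gen (E : Set ℝ) (a b : ℝ) :
    volume (E ∩ Ioc a b) ≠ ⊤ := by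
  refine ne_top_of_le_ne_top ?_ (measure_mono inter_subset_right)
  simp [Real.volume_Ioc]

lemma not_mem_halo' {E : Set ℝ} (hE : MeasurableSet E) {γ x : ℝ} (hx : x ∉ halo γ E)
    {b : ℝ} (hb : x < b) : volume (E ∩ Ioc x b) ≤ ENNReal.ofReal (γ * (b - x)) := by
  have hh : 0 < b - x := by linarith
  have := not_mem_halo hE hx hh
  rw [show x + (b - x) = b by ring] at this
  calc volume (E ∩ Ioc x b) = ENNReal.ofReal (volume (E ∩ Ioc x b)).toReal :=
        (ENNReal.ofReal_toReal (vol_inter_Ioc_ne_top_gen E x b)).symm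
    _ ≤ ENNReal.ofReal (γ * (b - x)) := ENNReal.ofReal_le_ofReal this

lemma halo_antitone {E : Set ℝ} {γ γ' : ℝ} (h : γ' ≤ γ) : halo γ E ⊆ halo γ' E :=
  fun _ hx => lt_of_le_of_lt h hx

lemma halo_mono_ae {S T : Set ℝ} (hS : MeasurableSet S) (hT : MeasurableSet T)
    (hST : volume (S \ T) = 0) {γ : ℝ} : halo γ S ⊆ halo γ T := by
  intro x hx
  obtain ⟨h, hh, hlt⟩ := (mem_halo_iff hS).1 hx
  refine (mem_halo_iff hT).2 ⟨h, hh, lt_of_lt_of_le hlt ?_⟩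
  have hsub : S ∩ Ioc x (x + h) ⊆ (T ∩ Ioc x (x + h)) ∪ (S \ T) := by
    intro t ⟨htS, htI⟩
    by_cases htT : t ∈ T
    · exact Or.inl ⟨htT, htI⟩
    · exact Or.inr ⟨htS, htT⟩
  have h1 : volume (S ∩ Ioc x (x + h)) ≤ volume (T ∩ Ioc x (x + h)) := by
    calc volume (S ∩ Ioc x (x + h)) ≤ volume ((T ∩ Ioc x (x + h)) ∪ (S \ T)) :=
          measure_mono hsub
      _ ≤ volume (T ∩ Ioc x (x + h)) + volume (S \ T) := measure_union_le _ _
      _ = volume (T ∩ Ioc x (x + h)) := by rw [hST, add_zero]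
  exact ENNReal.toReal_mono (vol_inter_Ioc_ne_top_gen T x (x + h)) h1

lemma halo_isOpen {E : Set ℝ} (hE : MeasurableSet E) {γ : ℝ} (hγ : 0 < γ) :
    IsOpen (halo γ E) := by
  rw [Metric.isOpen_iff]
  intro x hx
  obtain ⟨h, hh, hlt⟩ := (mem_halo_iff hE).1 hx
  set v := (volume (E ∩ Ioc x (x + h))).toReal with hv
  set δ := min (h / 2) ((v - γ * h) / (2 * (γ + 1))) with hδ
  have hγ1 : (0:ℝ) < γ + 1 := by linarith
  have hδpos : 0 < δ := by
    apply lt_min (by linarith)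
    apply div_pos (by linarith) (by linarith)
  refine ⟨δ, hδpos, ?_⟩
  intro y hy
  have hyx : |y - x| < δ := by
    rw [Metric.mem_ball, Real.dist_eq] at hy; exact hy
  have hy1 : x - δ < y := by
    rcases abs_lt.1 hyx with ⟨ha, hb⟩; linarith
  have hy2 : y < x + δ := by
    rcases abs_lt.1 hyx with ⟨ha, hb⟩; linarith
  set h' := x + h - y with hh'
  have hh'pos : 0 < h' := by
    have : δ ≤ h / 2 := min_le_left _ _
    simp only [hh']; linarith
  refine (mem_halo_iff hE).2 ⟨h', hh'pos, ?_⟩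
  have hyh' : y + h' = x + h := by simp only [hh']; ring
  rw [hyh']
  -- volume (E ∩ Ioc x (x+h)) ≤ volume (E ∩ Ioc y (x+h)) + volume (Ioc x y)
  have hsub : E ∩ Ioc x (x + h) ⊆ (E ∩ Ioc y (x + h)) ∪ Ioc x y := by
    intro t ⟨htE, ht1, ht2⟩
    by_cases hty : y < t
    · exact Or.inl ⟨htE, hty, ht2⟩
    · exact Or.inr ⟨ht1, not_lt.1 hty⟩
  have hvol : v ≤ (volume (E ∩ Ioc y (x + h))).toReal + δ := by
    have h1 : volume (E ∩ Ioc x (x + h)) ≤ volume (E ∩ Ioc y (x + h)) + ENNReal.ofReal δ := by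
      calc volume (E ∩ Ioc x (x + h)) ≤ volume ((E ∩ Ioc y (x + h)) ∪ Ioc x y) :=
            measure_mono hsub
        _ ≤ volume (E ∩ Ioc y (x + h)) + volume (Ioc x y) := measure_union_le _ _
        _ ≤ volume (E ∩ Ioc y (x + h)) + ENNReal.ofReal δ := by
            gcongr
            rw [Real.volume_Ioc]
            exact ENNReal.ofReal_le_ofReal (by linarith)
    have h2 := ENNReal.toReal_mono
      (by
        refine ENNReal.add_ne_top.2 ⟨vol_inter_Ioc_ne_top_gen E y (x+h), ENNReal.ofReal_ne_top⟩)
      h1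
    rw [ENNReal.toReal_add (vol_inter_Ioc_ne_top_gen E y (x+h)) ENNReal.ofReal_ne_top,
      ENNReal.toReal_ofReal hδpos.le] at h2
    exact h2
  have hδ2 : δ ≤ (v - γ * h) / (2 * (γ + 1)) := min_le_right _ _
  have hkey : (γ + 1) * δ ≤ (v - γ * h) / 2 := by
    rw [le_div_iff₀ (by linarith : (0:ℝ) < 2 * (γ + 1))] at hδ2
    nlinarith
  have hgh' : γ * h' ≤ γ * h + γ * δ := by
    have : h' ≤ h + δ := by simp only [hh']; linarith
    nlinarith
  have hfin : γ * h' < (volume (E ∩ Ioc y (x + h))).toReal := by nlinarith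
  convert hfin using 3

lemma vol_diff_halo_eq_zero {E : Set ℝ} (hE : MeasurableSet E) {α : ℝ}
    (hα0 : 0 < α) (hα1 : α < 1) : volume (E \ halo α E) = 0 := by
  have hdens := Besicovitch.ae_tendsto_measure_inter_div_of_measurableSet
    (volume : Measure ℝ) hE
  rw [MeasureTheory.measure_eq_zero_iff_ae_notMem]
  filter_upwards [hdens] with t ht
  rintro ⟨htE, hth⟩
  rw [Set.indicator_of_mem htE] at ht
  simp only [Pi.one_apply] at ht
  set c : ENNReal := ENNReal.ofReal ((1 + α) / 2) with hc
  have hc1 : c < 1 := by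
    rw [hc, ← ENNReal.ofReal_one]
    exact (ENNReal.ofReal_lt_ofReal_iff (by norm_num)).2 (by linarith)
  have hev : ∀ᶠ r in nhdsWithin 0 (Ioi 0), c <
      volume (E ∩ Metric.closedBall t r) / volume (Metric.closedBall t r) :=
    ht.eventually_const_lt hc1
  obtain ⟨r, hcr, hr⟩ := (hev.and self_mem_nhdsWithin).exists
  have hcb : volume (Metric.closedBall t r) = ENNReal.ofReal (2 * r) := by
    rw [Real.volume_closedBall]
  have hmul : c * ENNReal.ofReal (2 * r) < volume (E ∩ Metric.closedBall t r) := by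
    rw [← hcb]
    exact (ENNReal.lt_div_iff_mul_lt (Or.inl (by rw [hcb]; positivity))
      (Or.inl (by rw [hcb]; exact ENNReal.ofReal_ne_top))).1 hcr
  have hmul' : ENNReal.ofReal ((1 + α) * r) < volume (E ∩ Metric.closedBall t r) := by
    rw [hc, ← ENNReal.ofReal_mul (by positivity)] at hmul
    have : (1 + α) / 2 * (2 * r) = (1 + α) * r := by ring
    rwa [this] at hmul
  have hfin : volume (E ∩ Metric.closedBall t r) ≠ ⊤ := by
    refine ne_top_of_le_ne_top ?_ (measure_mono inter_subset_right)
    rw [hcb]; exact ENNReal.ofReal_ne_top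
  have htr : (1 + α) * r < (volume (E ∩ Metric.closedBall t r)).toReal := by
    exact (ENNReal.ofReal_lt_iff_lt_toReal (by positivity) hfin).1 hmul'
  have hsub : E ∩ Metric.closedBall t r ⊆ (E ∩ Ioc t (t + r)) ∪ Icc (t - r) t := by
    intro u ⟨huE, hu⟩
    rw [Real.closedBall_eq_Icc] at hu
    rcases lt_or_ge t u with h' | h'
    · exact Or.inl ⟨huE, h', hu.2⟩
    · exact Or.inr ⟨hu.1, h'⟩
  have hsum : (volume (E ∩ Metric.closedBall t r)).toReal ≤
      (volume (E ∩ Ioc t (t + r))).toReal + r := by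
    have h1 : volume (E ∩ Metric.closedBall t r) ≤
        volume (E ∩ Ioc t (t + r)) + ENNReal.ofReal r := by
      calc volume (E ∩ Metric.closedBall t r)
          ≤ volume ((E ∩ Ioc t (t + r)) ∪ Icc (t - r) t) := measure_mono hsub
        _ ≤ volume (E ∩ Ioc t (t + r)) + volume (Icc (t - r) t) := measure_union_le _ _
        _ ≤ volume (E ∩ Ioc t (t + r)) + ENNReal.ofReal r := by
            gcongr
            rw [Real.volume_Icc]
            exact ENNReal.ofReal_le_ofReal (by linarith)
    have h2 := ENNReal.toReal_mono
      (ENNReal.add_ne_top.2 ⟨vol_inter_Ioc_ne_top_gen E t (t + r), ENNReal.ofReal_ne_top⟩) h1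
    rwa [ENNReal.toReal_add (vol_inter_Ioc_ne_top_gen E t (t + r)) ENNReal.ofReal_ne_top,
      ENNReal.toReal_ofReal hr.le] at h2
  exact hth ((mem_halo_iff hE).2 ⟨r, hr, by nlinarith⟩)

-- per-component bound
lemma component_bound {E : Set ℝ} (hE : MeasurableSet E) {α : ℝ} (hα0 : 0 < α)
    {x : ℝ} (hx : x ∉ halo α E) {C : Set ℝ} (hCopen : IsOpen C)
    (hCconn : IsPreconnected C) (hCsub : C ⊆ Ioi x) (hCnon : C.Nonempty)
    (haG : sInf C ∉ halo α E) (s : ℝ) :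
    volume (E ∩ (C ∩ Iic s)) ≤ ENNReal.ofReal α * volume (C ∩ Iic s) := by
  rcases eq_empty_or_nonempty (C ∩ Iic s) with hempty | hne
  · rw [hempty]; simp
  set a := sInf C with ha
  have hbdd : BddBelow C := ⟨x, fun y hy => (mem_Ioi.1 (hCsub hy)).le⟩
  have ha_notC : a ∉ C := by
    intro haC
    obtain ⟨ε, hε, hball⟩ := Metric.isOpen_iff.1 hCopen a haC
    have h1 : a - ε / 2 ∈ C := by
      apply hball
      rw [Metric.mem_ball, Real.dist_eq]
      rw [abs_of_nonpos (by linarith)]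
      linarith
    have := csInf_le hbdd h1
    linarith
  obtain ⟨y₀, hy₀C, hy₀s⟩ := hne
  have hy₀a : a < y₀ := lt_of_le_of_ne (csInf_le hbdd hy₀C) (fun h => ha_notC (h ▸ hy₀C))
  have hbddA : BddAbove (C ∩ Iic s) := ⟨s, fun y hy => hy.2⟩
  set m := sSup (C ∩ Iic s) with hm
  have hms : m ≤ s := csSup_le ⟨y₀, hy₀C, hy₀s⟩ (fun y hy => hy.2)
  have ham : a < m := lt_of_lt_of_le hy₀a (le_csSup hbddA ⟨hy₀C, hy₀s⟩)
  have hsub1 : C ∩ Iic s ⊆ Ioc a m := by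
    rintro y ⟨hyC, hys⟩
    exact ⟨lt_of_le_of_ne (csInf_le hbdd hyC) (fun h => ha_notC (h ▸ hyC)),
      le_csSup hbddA ⟨hyC, hys⟩⟩
  have hsub2 : Ioo a m ⊆ C ∩ Iic s := by
    rintro z ⟨hz1, hz2⟩
    obtain ⟨w, hwC, hwz⟩ := exists_lt_of_csInf_lt (⟨y₀, hy₀C⟩ : C.Nonempty) (by rw [← ha]; exact hz1)
    obtain ⟨y, hyCs, hzy⟩ := exists_lt_of_lt_csSup (⟨y₀, ⟨hy₀C, hy₀s⟩⟩ : (C ∩ Iic s).Nonempty) (by rw [← hm]; exact hz2)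
    have hzC : z ∈ C := by
      have hoc := hCconn.ordConnected
      exact hoc.out hwC hyCs.1 ⟨hwz.le, hzy.le⟩
    exact ⟨hzC, le_trans hzy.le hyCs.2⟩
  have hvolC : volume (C ∩ Iic s) = ENNReal.ofReal (m - a) := by
    apply le_antisymm
    · calc volume (C ∩ Iic s) ≤ volume (Ioc a m) := measure_mono hsub1
        _ = ENNReal.ofReal (m - a) := Real.volume_Ioc
    · calc ENNReal.ofReal (m - a) = volume (Ioo a m) := Real.volume_Ioo.symm
        _ ≤ volume (C ∩ Iic s) := measure_mono hsub2
  have hEb : volume (E ∩ Ioc a m) ≤ ENNReal.ofReal (α * (m - a)) := not_mem_halo' hE haG ham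
  calc volume (E ∩ (C ∩ Iic s)) ≤ volume (E ∩ Ioc a m) := by
        apply measure_mono; intro t ⟨h1, h2⟩; exact ⟨h1, hsub1 h2⟩
    _ ≤ ENNReal.ofReal (α * (m - a)) := hEb
    _ = ENNReal.ofReal α * ENNReal.ofReal (m - a) := ENNReal.ofReal_mul hα0.le
    _ = ENNReal.ofReal α * volume (C ∩ Iic s) := by rw [hvolC]

lemma key_lemma {E : Set ℝ} (hE : MeasurableSet E) {α : ℝ} (hα0 : 0 < α) (hα1 : α < 1)
    {x : ℝ} (hx : x ∉ halo α E) (s : ℝ) :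
    volume (E ∩ Ioc x s) ≤ ENNReal.ofReal α * volume (halo α E ∩ Ioc x s) := by
  set G := halo α E with hGdef
  have hGopen : IsOpen G := halo_isOpen hE hα0
  set G' := G ∩ Ioi x with hG'def
  have hG'open : IsOpen G' := hGopen.inter isOpen_Ioi
  set 𝒞 : Set (Set ℝ) := {C | ∃ t ∈ G', connectedComponentIn G' t = C} with h𝒞
  -- components facts
  have hCopen : ∀ C ∈ 𝒞, IsOpen C := by
    rintro C ⟨t, ht, rfl⟩; exact hG'open.connectedComponentIn
  have hCnon : ∀ C ∈ 𝒞, C.Nonempty := by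
    rintro C ⟨t, ht, rfl⟩; exact ⟨t, mem_connectedComponentIn ht⟩
  have hCsubG' : ∀ C ∈ 𝒞, C ⊆ G' := by
    rintro C ⟨t, ht, rfl⟩; exact connectedComponentIn_subset _ _
  have hCeq : ∀ C ∈ 𝒞, ∀ y ∈ C, connectedComponentIn G' y = C := by
    rintro C ⟨t, ht, rfl⟩ y hy
    exact (connectedComponentIn_eq hy).symm
  have hdisj : 𝒞.PairwiseDisjoint id := by
    rintro C₁ hC₁ C₂ hC₂ hne
    rw [Function.onFun, disjoint_left]
    intro u hu1 hu2
    exact hne (((hCeq C₁ hC₁ u hu1).symm).trans (hCeq C₂ hC₂ u hu2))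
  have hcount : 𝒞.Countable :=
    hdisj.countable_of_isOpen (fun C hC => hCopen C hC) (fun C hC => hCnon C hC)
  have hunion : ⋃ C ∈ 𝒞, C = G' := by
    apply subset_antisymm
    · exact iUnion₂_subset hCsubG'
    · intro t ht
      exact mem_biUnion ⟨t, ht, rfl⟩ (mem_connectedComponentIn ht)
  -- sInf of each component is not in halo
  have hInf : ∀ C ∈ 𝒞, sInf C ∉ G := by
    intro C hC
    set a := sInf C with ha
    have hsubIoi : C ⊆ Ioi x := (hCsubG' C hC).trans inter_subset_right
    have hbdd : BddBelow C := ⟨x, fun y hy => (mem_Ioi.1 (hsubIoi hy)).le⟩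
    have hax : x ≤ a := le_csInf (hCnon C hC) (fun y hy => (mem_Ioi.1 (hsubIoi hy)).le)
    have ha_notC : a ∉ C := by
      intro haC
      obtain ⟨ε, hε, hball⟩ := Metric.isOpen_iff.1 (hCopen C hC) a haC
      have h1 : a - ε / 2 ∈ C := by
        apply hball
        rw [Metric.mem_ball, Real.dist_eq, abs_of_nonpos (by linarith)]
        linarith
      have := csInf_le hbdd h1
      linarith
    rcases eq_or_lt_of_le hax with heq | hlt
    · rw [← heq]; exact hx
    · intro haG
      have haG' : a ∈ G' := ⟨haG, hlt⟩
      have hD : connectedComponentIn G' a ∈ nhds a :=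
        connectedComponentIn_mem_nhds (hG'open.mem_nhds haG')
      have haclos : a ∈ closure C := csInf_mem_closure (hCnon C hC) hbdd
      obtain ⟨y, hyD, hyC⟩ := mem_closure_iff_nhds.1 haclos _ hD
      have h1 : connectedComponentIn G' y = C := hCeq C hC y hyC
      have h2 : connectedComponentIn G' a = connectedComponentIn G' y :=
        connectedComponentIn_eq hyD
      exact ha_notC (by rw [← h1, ← h2]; exact mem_connectedComponentIn haG')
  -- assembly
  have hEG : volume (E \ G) = 0 := vol_diff_halo_eq_zero hE hα0 hα1
  have hCIic : ∀ C ∈ 𝒞, C ∩ Ioc x s = C ∩ Iic s := by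
    intro C hC
    ext t
    constructor
    · rintro ⟨h1, h2⟩; exact ⟨h1, h2.2⟩
    · rintro ⟨h1, h2⟩
      exact ⟨h1, mem_Ioi.1 ((hCsubG' C hC h1).2), h2⟩
  have hmeas : ∀ C ∈ 𝒞, MeasurableSet (C ∩ Iic s) :=
    fun C hC => ((hCopen C hC).measurableSet).inter measurableSet_Iic
  have step1 : volume (E ∩ Ioc x s) ≤ volume (⋃ C ∈ 𝒞, (E ∩ (C ∩ Iic s))) := by
    have hsub : E ∩ Ioc x s ⊆ (⋃ C ∈ 𝒞, (E ∩ (C ∩ Iic s))) ∪ (E \ G) := by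
      rintro t ⟨htE, htI⟩
      by_cases htG : t ∈ G
      · have htG' : t ∈ G' := ⟨htG, htI.1⟩
        have : t ∈ ⋃ C ∈ 𝒞, C := by rw [hunion]; exact htG'
        obtain ⟨C, hC, htC⟩ := mem_iUnion₂.1 this
        exact Or.inl (mem_iUnion₂.2 ⟨C, hC, htE, htC, htI.2⟩)
      · exact Or.inr ⟨htE, htG⟩
    calc volume (E ∩ Ioc x s) ≤ volume ((⋃ C ∈ 𝒞, (E ∩ (C ∩ Iic s))) ∪ (E \ G)) :=
          measure_mono hsub
      _ ≤ volume (⋃ C ∈ 𝒞, (E ∩ (C ∩ Iic s))) + volume (E \ G) := measure_union_le _ _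
      _ = volume (⋃ C ∈ 𝒞, (E ∩ (C ∩ Iic s))) := by rw [hEG, add_zero]
  have step2 : volume (⋃ C ∈ 𝒞, (E ∩ (C ∩ Iic s))) ≤
      ∑' C : 𝒞, volume (E ∩ ((C : Set ℝ) ∩ Iic s)) :=
    measure_biUnion_le volume hcount _
  have step3 : ∑' C : 𝒞, volume (E ∩ ((C : Set ℝ) ∩ Iic s)) ≤
      ∑' C : 𝒞, ENNReal.ofReal α * volume ((C : Set ℝ) ∩ Iic s) := by
    apply ENNReal.tsum_le_tsum
    rintro ⟨C, hC⟩
    exact component_bound hE hα0 hx (hCopen C hC)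
      (by obtain ⟨t, ht, rfl⟩ := hC; exact isPreconnected_connectedComponentIn)
      ((hCsubG' C hC).trans inter_subset_right) (hCnon C hC) (hInf C hC) s
  have step4 : ∑' C : 𝒞, ENNReal.ofReal α * volume ((C : Set ℝ) ∩ Iic s) =
      ENNReal.ofReal α * volume (G ∩ Ioc x s) := by
    rw [ENNReal.tsum_mul_left]
    congr 1
    have hd2 : 𝒞.PairwiseDisjoint (fun C => C ∩ Iic s) := by
      intro C₁ hC₁ C₂ hC₂ hne
      exact Disjoint.mono inter_subset_left inter_subset_left (hdisj hC₁ hC₂ hne)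
    rw [← measure_biUnion hcount hd2 hmeas]
    congr 1
    rw [← iUnion₂_inter, hunion]
    rw [hG'def]
    ext t
    constructor
    · rintro ⟨⟨h1, h2⟩, h3⟩; exact ⟨h1, h2, h3⟩
    · rintro ⟨h1, h2, h3⟩; exact ⟨⟨h1, h2⟩, h3⟩
  calc volume (E ∩ Ioc x s) ≤ ∑' C : 𝒞, volume (E ∩ ((C : Set ℝ) ∩ Iic s)) :=
        le_trans step1 step2
    _ ≤ ∑' C : 𝒞, ENNReal.ofReal α * volume ((C : Set ℝ) ∩ Iic s) := step3
    _ = ENNReal.ofReal α * volume (G ∩ Ioc x s) := step4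

lemma stepping {E : Set ℝ} (hE : MeasurableSet E) {lam α : ℝ}
    (h0 : 0 < lam) (h1 : lam < α) (h2 : α < 1) :
    halo lam E ⊆ halo (lam / α) (halo α E) := by
  intro x hx
  have hα0 : 0 < α := lt_trans h0 h1
  have hGmeas : MeasurableSet (halo α E) := (halo_isOpen hE hα0).measurableSet
  by_cases hxG : x ∈ halo α E
  · -- trivial case: x in open set G, small interval fully inside
    obtain ⟨ε, hε, hball⟩ := Metric.isOpen_iff.1 (halo_isOpen hE hα0) x hxG
    refine (mem_halo_iff hGmeas).2 ⟨ε / 2, by linarith, ?_⟩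
    have hsub : Ioc x (x + ε / 2) ⊆ halo α E ∩ Ioc x (x + ε / 2) := by
      rintro t ⟨ht1, ht2⟩
      refine ⟨hball ?_, ht1, ht2⟩
      rw [Metric.mem_ball, Real.dist_eq, abs_of_pos (by linarith)]
      linarith
    have h3 : ENNReal.ofReal (ε / 2) ≤ volume (halo α E ∩ Ioc x (x + ε / 2)) := by
      calc ENNReal.ofReal (ε / 2) = volume (Ioc x (x + ε / 2)) := by
            rw [Real.volume_Ioc]; ring_nf
        _ ≤ volume (halo α E ∩ Ioc x (x + ε / 2)) := measure_mono hsub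
    have h4 : ε / 2 ≤ (volume (halo α E ∩ Ioc x (x + ε / 2))).toReal := by
      have := ENNReal.toReal_mono (vol_inter_Ioc_ne_top_gen _ x (x + ε/2)) h3
      rwa [ENNReal.toReal_ofReal (by linarith)] at this
    have h5 : lam / α < 1 := (div_lt_one hα0).2 h1
    nlinarith
  · obtain ⟨h, hh, hlt⟩ := (mem_halo_iff hE).1 hx
    have hkey := key_lemma hE hα0 h2 hxG (x + h)
    refine (mem_halo_iff hGmeas).2 ⟨h, hh, ?_⟩
    -- lam * h < vol(E∩Ioc) ≤ α * vol(G∩Ioc)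
    have h3 : ENNReal.ofReal (lam * h) < volume (E ∩ Ioc x (x + h)) := by
      rw [← ENNReal.ofReal_toReal (vol_inter_Ioc_ne_top_gen E x (x + h))]
      exact ENNReal.ofReal_lt_ofReal_iff_of_nonneg (by positivity) |>.2 hlt
    have h4 : ENNReal.ofReal (lam * h) < ENNReal.ofReal α * volume (halo α E ∩ Ioc x (x + h)) :=
      lt_of_lt_of_le h3 hkey
    set V := (volume (halo α E ∩ Ioc x (x + h))).toReal with hV
    have hVfin := vol_inter_Ioc_ne_top_gen (halo α E) x (x + h)
    have h5 : ENNReal.ofReal α * volume (halo α E ∩ Ioc x (x + h)) = ENNReal.ofReal (α * V) := by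
      conv_lhs => rw [← ENNReal.ofReal_toReal hVfin]
      rw [← ENNReal.ofReal_mul hα0.le]
    rw [h5] at h4
    have h6 : lam * h < α * V := by
      have := (ENNReal.ofReal_lt_ofReal_iff_of_nonneg (by positivity)).1 h4
      exact this
    rw [div_mul_eq_mul_div, div_lt_iff₀ hα0]
    nlinarith

lemma halo_self_improve {S : Set ℝ} (hS : MeasurableSet S) {α : ℝ}
    (hα0 : 0 < α) (hα1 : α < 1) : halo α S ⊆ halo α (halo α S) :=
  halo_mono_ae hS (halo_isOpen hS hα0).measurableSet (vol_diff_halo_eq_zero hS hα0 hα1)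

lemma halo_iter_self {α : ℝ} (hα0 : 0 < α) (hα1 : α < 1) :
    ∀ n : ℕ, ∀ S : Set ℝ, MeasurableSet S →
      halo α S ⊆ (fun S => halo α S)^[n] (halo α S) := by
  intro n
  induction n with
  | zero => intro S _; simp
  | succ n ih =>
    intro S hS
    have hGmeas : MeasurableSet (halo α S) := (halo_isOpen hS hα0).measurableSet
    calc halo α S ⊆ halo α (halo α S) := halo_self_improve hS hα0 hα1
      _ ⊆ (fun S => halo α S)^[n] (halo α (halo α S)) := ih (halo α S) hGmeas
      _ = (fun S => halo α S)^[n + 1] (halo α S) := by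
          rw [Function.iterate_succ_apply]

lemma main_induction {α : ℝ} (hα0 : 0 < α) (hα1 : α < 1) :
    ∀ n : ℕ, 1 ≤ n → ∀ lam : ℝ, 0 < lam → α ^ n ≤ lam →
      ∀ E : Set ℝ, MeasurableSet E →
        halo lam E ⊆ (fun S => halo α S)^[n] E := by
  intro n
  induction n with
  | zero => omega
  | succ n ih =>
    intro _ lam hlam hle E hE
    rcases Nat.eq_zero_or_pos n with rfl | hn
    · -- n = 0 : N = 1, α ≤ lam
      rw [zero_add, pow_one] at hle
      rw [zero_add, Function.iterate_one]
      exact halo_antitone hle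
    rcases le_or_gt α lam with hcase | hcase
    · -- lam ≥ α
      calc halo lam E ⊆ halo α E := halo_antitone hcase
        _ ⊆ (fun S => halo α S)^[n] (halo α E) := halo_iter_self hα0 hα1 n E hE
        _ = (fun S => halo α S)^[n + 1] E := by rw [Function.iterate_succ_apply]
    · -- lam < α : use stepping
      have hstep := stepping hE hlam hcase hα1
      have hGmeas : MeasurableSet (halo α E) := (halo_isOpen hE (lt_trans hlam hcase)).measurableSet
      have hdiv0 : 0 < lam / α := div_pos hlam hα0
      have hdivle : α ^ n ≤ lam / α := by
        rw [le_div_iff₀ hα0]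
        calc α ^ n * α = α ^ (n + 1) := by ring
          _ ≤ lam := hle
      calc halo lam E ⊆ halo (lam / α) (halo α E) := hstep
        _ ⊆ (fun S => halo α S)^[n] (halo α E) := ih hn (lam / α) hdiv0 hdivle _ hGmeas
        _ = (fun S => halo α S)^[n + 1] E := by rw [Function.iterate_succ_apply]

theorem stmt7 (E : Set ℝ) (hE : MeasurableSet E) (lam α : ℝ)
    (h0 : 0 < lam) (h1 : lam < α) (h2 : α < 1) :
    halo lam E ⊆ (fun S => halo α S)^[⌈Real.log (1 / lam) / Real.log (1 / α)⌉₊] E := by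
  have hα0 : 0 < α := lt_trans h0 h1
  have hlam1 : lam < 1 := lt_trans h1 h2
  set N := ⌈Real.log (1 / lam) / Real.log (1 / α)⌉₊ with hN
  have hlogα : 0 < Real.log (1 / α) := Real.log_pos (by rw [lt_div_iff₀ hα0]; linarith)
  have hloglam : 0 < Real.log (1 / lam) := Real.log_pos (by rw [lt_div_iff₀ h0]; linarith)
  have hratio : 0 < Real.log (1 / lam) / Real.log (1 / α) := div_pos hloglam hlogα
  have hN1 : 1 ≤ N := by
    rw [hN]
    exact Nat.one_le_iff_ne_zero.2 (by
      intro hc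
      have := Nat.ceil_eq_zero.1 hc
      linarith)
  have hNle : Real.log (1 / lam) / Real.log (1 / α) ≤ (N : ℝ) := Nat.le_ceil _
  have hpow : α ^ N ≤ lam := by
    have h3 : Real.log (1 / lam) ≤ (N : ℝ) * Real.log (1 / α) := by
      rw [div_le_iff₀ hlogα] at hNle
      linarith
    rw [Real.log_div one_ne_zero h0.ne', Real.log_div one_ne_zero hα0.ne',
      Real.log_one] at h3
    have h4 : (N : ℝ) * Real.log α ≤ Real.log lam := by nlinarith
    have h5 : Real.log (α ^ N) ≤ Real.log lam := by
      rw [Real.log_pow]; exact h4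
    calc α ^ N = Real.exp (Real.log (α ^ N)) := (Real.exp_log (pow_pos hα0 N)).symm
      _ ≤ Real.exp (Real.log lam) := Real.exp_le_exp.2 h5
      _ = lam := Real.exp_log h0
  exact main_induction hα0 h2 N hN1 lam h0 hpow E hE
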